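/- Let r ≥ 1 and let D ≥ 3 be an odd integer; set k := (D−1)/2 and N := rk. Let 2 ≤ α_1 < ⋯ < α_{2N} be integers such that α_t is odd for 1 ≤ t ≤ N and α_t is even for N+1 ≤ t ≤ 2N. Let Δ' be the determinant of the N × N matrix with rows t ∈ {1,…,N} and columns indexed by pairs (m,v), 0 ≤ m ≤ r−1, 1 ≤ v ≤ k, with entry D^{α_t+m}(B_{α_t+m}(v/D) − B_{α_t+m})/(α_t+m), and let Δ'' be the determinant of the N × N matrix defined in the same way but with rows t ∈ {N+1,…,2N}. Then there exists a nonzero rational number C such that Δ̃_{r,D}(α_1,…,α_{2N}) = C · Δ' · Δ''. In particular, if Δ' ≠ 0 and Δ'' ≠ 0 then Δ̃_{r,D}(α) ≠ 0. -/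

import Mathlib

open Polynomial in
lemma bern_comp_one_sub (n : ℕ) :
    (Polynomial.bernoulli n).comp (1 - X) = (-1 : ℚ[X])^n * Polynomial.bernoulli n := by
  induction n with
  | zero => simp [Polynomial.bernoulli_zero]
  | succ n ih =>
    have hzero : derivative ((Polynomial.bernoulli (n+1)).comp (1 - X)
        - (-1 : ℚ[X])^(n+1) * Polynomial.bernoulli (n+1)) = 0 := by
      rw [derivative_sub, derivative_comp, Polynomial.derivative_bernoulli_add_one,
        derivative_mul, mul_comp, add_comp, natCast_comp, one_comp, ih]
      have hd1 : derivative ((-1 : ℚ[X])^(n+1)) = 0 := by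
        rw [show ((-1 : ℚ[X])^(n+1)) = Polynomial.C ((-1:ℚ)^(n+1)) by simp [map_pow],
          Polynomial.derivative_C]
      rw [hd1, Polynomial.derivative_bernoulli_add_one]
      simp only [derivative_sub, derivative_one, derivative_X, zero_sub, zero_mul, zero_add]
      ring
    set p := (Polynomial.bernoulli (n+1)).comp (1 - X)
        - (-1 : ℚ[X])^(n+1) * Polynomial.bernoulli (n+1) with hp
    have hC := Polynomial.eq_C_of_derivative_eq_zero hzero
    have heval : p.eval 0 = 0 := by
      simp only [hp, eval_sub, eval_comp, eval_one, eval_X, sub_zero, eval_mul, eval_pow,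
        eval_neg, Polynomial.bernoulli_eval_one, Polynomial.bernoulli_eval_zero]
      rw [bernoulli'_eq_bernoulli]
      ring
    have hp0 : p = 0 := by
      rw [hC, Polynomial.coeff_zero_eq_eval_zero, heval, map_zero]
    exact sub_eq_zero.mp hp0

lemma bern_reflect (n : ℕ) (x : ℚ) :
    (Polynomial.bernoulli n).eval (1 - x) = (-1 : ℚ)^n * (Polynomial.bernoulli n).eval x := by
  have := congrArg (Polynomial.eval x) (bern_comp_one_sub n)
  simpa [Polynomial.eval_comp] using this

/-- The entry function of the Δ̃ matrix. -/
noncomputable def Ent (D n v : ℕ) : ℚ :=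
  (D : ℚ) ^ n * ((Polynomial.bernoulli n).eval ((v : ℚ) / (D : ℚ)) - bernoulli n) / ((n : ℕ) : ℚ)

lemma bernoulli_odd_zero {n : ℕ} (h : Odd n) (hn : 2 ≤ n) : bernoulli n = 0 := by
  rw [bernoulli_eq_bernoulli'_of_ne_one (by omega)]
  exact bernoulli'_eq_zero_of_odd h (by omega)

lemma ent_reflect {D n : ℕ} (hD : 0 < D) (hn : 2 ≤ n) {v : ℕ} (hv : v ≤ D) :
    Ent D n (D - v) = (-1 : ℚ)^n * Ent D n v := by
  have hDQ : (D : ℚ) ≠ 0 := by positivity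
  have hcast : ((D - v : ℕ) : ℚ) = (D : ℚ) - (v : ℚ) := by push_cast [hv]; ring
  have harg : ((D : ℚ) - v) / D = 1 - (v : ℚ) / D := by field_simp
  have hb : ((-1 : ℚ))^n * bernoulli n = bernoulli n := by
    rcases Nat.even_or_odd n with he | ho
    · rw [he.neg_one_pow, one_mul]
    · rw [bernoulli_odd_zero ho hn, mul_zero]
  unfold Ent
  rw [hcast, harg, bern_reflect]
  linear_combination ((D:ℚ)^n / (n:ℚ)) * hb

lemma dm_div {c : ℕ} (q : ℕ) {u : ℕ} (hu : u < c) : (c * q + u) / c = q := by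
  rw [Nat.mul_add_div (by omega), Nat.div_eq_of_lt hu, add_zero]

lemma dm_mod {c : ℕ} (q : ℕ) {u : ℕ} (hu : u < c) : (c * q + u) % c = u := by
  rw [Nat.mul_add_mod, Nat.mod_eq_of_lt hu]

lemma pair_bound {r k a : ℕ} (ha : a < r * k) {u : ℕ} (hu : u < 2 * k) :
    2 * k * (a / k) + u < r * (2 * k) := by
  have hk : 0 < k := by
    rcases Nat.eq_zero_or_pos k with rfl | h
    · omega
    · exact h
  have hq : a / k < r := (Nat.div_lt_iff_lt_mul hk).mpr ha
  calc 2*k*(a/k) + u < 2*k*(a/k) + 2*k := by omega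
    _ = 2*k*(a/k + 1) := by ring
    _ ≤ 2*k*r := Nat.mul_le_mul_left _ hq
    _ = r*(2*k) := by ring

lemma pair_inj {k q₁ u₁ q₂ u₂ : ℕ} (h₁ : u₁ < 2*k) (h₂ : u₂ < 2*k)
    (h : 2*k*q₁ + u₁ = 2*k*q₂ + u₂) : q₁ = q₂ ∧ u₁ = u₂ := by
  have hm := congrArg (· % (2*k)) h
  simp only [dm_mod _ h₁, dm_mod _ h₂] at hm
  have hd := congrArg (· / (2*k)) h
  simp only [dm_div _ h₁, dm_div _ h₂] at hd
  exact ⟨hd, hm⟩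



/-- `Δ̃_{r,D}(α)` : the determinant of the `r(D−1) × r(D−1)` matrix whose rows are indexed by
`i ∈ {0,…,r(D−1)−1}` and whose columns `j` encode the pair `(m,v)` with `m = j / (D−1)` and
`v = j % (D−1) + 1 ∈ {1,…,D−1}`, with entry
`D^(α_i+m) * (B_{α_i+m}(v/D) − B_{α_i+m}) / (α_i+m)`. -/
noncomputable def DeltaTilde (r D : ℕ) (α : ℕ → ℕ) : ℚ :=
  Matrix.det (Matrix.of fun i j : Fin (r * (D - 1)) =>
    (D : ℚ) ^ (α i.val + j.val / (D - 1)) *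
      ((Polynomial.bernoulli (α i.val + j.val / (D - 1))).eval
          (((j.val % (D - 1) : ℕ) + 1 : ℚ) / (D : ℚ)) -
        bernoulli (α i.val + j.val / (D - 1))) /
      ((α i.val + j.val / (D - 1) : ℕ) : ℚ))

/-- The `N × N` matrix (`N = r·k`, `k = (D−1)/2`) with rows indexed by
`i ∈ {0,…,N−1}` (the row `i` using `α_{s+i}` for an offset `s`) and columns `j` encoding
`(m,v)` with `m = j / k ∈ {0,…,r−1}`, `v = j % k + 1 ∈ {1,…,k}`, with entry
`D^(α_{s+i}+m) * (B_{α_{s+i}+m}(v/D) − B_{α_{s+i}+m}) / (α_{s+i}+m)`. -/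
noncomputable def DeltaHalf (r D : ℕ) (α : ℕ → ℕ) (s : ℕ) : ℚ :=
  Matrix.det (Matrix.of fun i j : Fin (r * ((D - 1) / 2)) =>
    (D : ℚ) ^ (α (s + i.val) + j.val / ((D - 1) / 2)) *
      ((Polynomial.bernoulli (α (s + i.val) + j.val / ((D - 1) / 2))).eval
          (((j.val % ((D - 1) / 2) : ℕ) + 1 : ℚ) / (D : ℚ)) -
        bernoulli (α (s + i.val) + j.val / ((D - 1) / 2))) /
      ((α (s + i.val) + j.val / ((D - 1) / 2) : ℕ) : ℚ))

/-- Let `r ≥ 1`, `D ≥ 3` odd, `k = (D−1)/2`, `N = r·k`. Let `2 ≤ α_0 < ⋯ < α_{2N−1}` be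
integers, odd in the first half and even in the second. Then
`Δ̃_{r,D}(α) = C·Δ'·Δ''` for some nonzero rational `C`, where `Δ'` uses rows
`α_0,…,α_{N−1}` and `Δ''` uses rows `α_N,…,α_{2N−1}`. In particular, if `Δ' ≠ 0` and
`Δ'' ≠ 0` then `Δ̃_{r,D}(α) ≠ 0`. -/
theorem deltaTilde_eq_product (r D : ℕ) (hr : 1 ≤ r) (hD3 : 3 ≤ D) (hDodd : Odd D)
    (α : ℕ → ℕ) (hα : StrictMonoOn α (Set.Iio (r * (D - 1)))) (hα2 : 2 ≤ α 0)
    (hodd : ∀ i < r * ((D - 1) / 2), Odd (α i))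
    (heven : ∀ i, r * ((D - 1) / 2) ≤ i → i < 2 * (r * ((D - 1) / 2)) → Even (α i)) :
    (∃ C : ℚ, C ≠ 0 ∧
      DeltaTilde r D α = C * DeltaHalf r D α 0 * DeltaHalf r D α (r * ((D - 1) / 2))) ∧
    (DeltaHalf r D α 0 ≠ 0 → DeltaHalf r D α (r * ((D - 1) / 2)) ≠ 0 →
      DeltaTilde r D α ≠ 0) := by
  have hDT : DeltaTilde r D α = (Matrix.of fun i j : Fin (r * (D - 1)) =>
      Ent D (α i.val + j.val / (D - 1)) (j.val % (D - 1) + 1)).det := by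
    unfold DeltaTilde Ent
    congr 1; ext i j; simp only [Matrix.of_apply]; push_cast; ring
  have hDH : ∀ s, DeltaHalf r D α s = (Matrix.of fun a c : Fin (r * ((D - 1) / 2)) =>
      Ent D (α (s + a.val) + c.val / ((D - 1) / 2)) (c.val % ((D - 1) / 2) + 1)).det := by
    intro s
    unfold DeltaHalf Ent
    congr 1; ext i j; simp only [Matrix.of_apply]; push_cast; ring
  obtain ⟨c0, hc0⟩ := hDodd
  set k := (D - 1) / 2 with hkdef
  set N := r * k with hNdef
  clear_value k
  have hk2 : D - 1 = 2 * k := by omega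
  have hk1 : 1 ≤ k := by omega
  clear_value N
  have hNN : N + N = r * (D - 1) := by rw [hk2, hNdef]; ring
  -- column equiv
  have hbnd1 : ∀ a : Fin N, ∀ {u : ℕ}, u < 2 * k → 2*k*(a.val/k) + u < r * (D - 1) := by
    intro a u hu
    rw [hk2]
    exact pair_bound (hNdef ▸ a.isLt) hu
  have hmlt : ∀ c : Fin N, c.val % k < k := fun c => Nat.mod_lt _ (by omega)
  obtain ⟨τcol, hτl, hτr⟩ : ∃ e : (Fin N ⊕ Fin N) ≃ Fin (r * (D - 1)),
      (∀ c : Fin N, (e (Sum.inl c)).val = 2*k*(c.val/k) + c.val % k) ∧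
      (∀ c : Fin N, (e (Sum.inr c)).val = 2*k*(c.val/k) + (2*k - 1 - c.val % k)) := by
    have hinj : Function.Injective (fun x : Fin N ⊕ Fin N => match x with
      | Sum.inl a => (⟨2*k*(a.val/k) + a.val % k, hbnd1 a (by have := hmlt a; omega)⟩ : Fin (r * (D-1)))
      | Sum.inr a => ⟨2*k*(a.val/k) + (2*k - 1 - a.val % k), hbnd1 a (by omega)⟩) := by
      rintro (a | a) (b | b) h <;> simp only [Fin.mk.injEq] at h
      · obtain ⟨hq, hu⟩ := pair_inj (by have := hmlt a; omega) (by have := hmlt b; omega) h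
        exact congrArg Sum.inl (Fin.ext
          (by rw [← Nat.div_add_mod a.val k, ← Nat.div_add_mod b.val k, hq, hu]))
      · obtain ⟨hq, hu⟩ := pair_inj (by have := hmlt a; omega) (by omega) h
        have := hmlt a; have := hmlt b; omega
      · obtain ⟨hq, hu⟩ := pair_inj (by omega) (by have := hmlt b; omega) h
        have := hmlt a; have := hmlt b; omega
      · obtain ⟨hq, hu⟩ := pair_inj (by omega) (by omega) h
        have := hmlt a; have := hmlt b
        have hu' : a.val % k = b.val % k := by omega
        exact congrArg Sum.inr (Fin.ext
          (by rw [← Nat.div_add_mod a.val k, ← Nat.div_add_mod b.val k, hq, hu']))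
    exact ⟨Equiv.ofBijective _ ((Fintype.bijective_iff_injective_and_card _).mpr
      ⟨hinj, by simp [hNN]⟩), fun c => rfl, fun c => rfl⟩
  -- row equiv
  obtain ⟨τrow, hρl, hρr⟩ : ∃ e : (Fin N ⊕ Fin N) ≃ Fin (r * (D - 1)),
      (∀ a : Fin N, (e (Sum.inl a)).val = a.val) ∧
      (∀ a : Fin N, (e (Sum.inr a)).val = N + a.val) := by
    refine ⟨finSumFinEquiv.trans (finCongr hNN), ?_, ?_⟩ <;> intro a <;>
      simp [Nat.add_comm]
  -- matrices
  set M : Matrix (Fin (r * (D - 1))) (Fin (r * (D - 1))) ℚ :=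
    Matrix.of (fun i j => Ent D (α i.val + j.val / (D - 1)) (j.val % (D - 1) + 1)) with hM
  set G₁ : Matrix (Fin N) (Fin N) ℚ :=
    Matrix.of (fun a c : Fin N => Ent D (α (0 + a.val) + c.val / k) (c.val % k + 1)) with hG₁
  set G₂ : Matrix (Fin N) (Fin N) ℚ :=
    Matrix.of (fun a c : Fin N => Ent D (α (N + a.val) + c.val / k) (c.val % k + 1)) with hG₂
  set ε : Fin N → ℚ := fun c => if Even (c.val / k) then (-1 : ℚ) else 1 with hε
  set S : Matrix (Fin N ⊕ Fin N) (Fin N ⊕ Fin N) ℚ :=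
    Matrix.fromBlocks 1 1 (Matrix.diagonal ε) (Matrix.diagonal (fun c => -ε c)) with hS
  have hDH1 : DeltaHalf r D α 0 = G₁.det := hDH 0
  have hDH2 : DeltaHalf r D α N = G₂.det := hDH N
  -- basic facts
  have hα2' : ∀ i : Fin (r * (D - 1)), 2 ≤ α i.val := by
    intro i
    rcases Nat.eq_zero_or_pos i.val with h0 | h0
    · rw [h0]; exact hα2
    · exact le_trans hα2 (le_of_lt (hα (by simp [Set.mem_Iio]; omega) (by simp [Set.mem_Iio, i.isLt]) h0))
  -- entry identities
  have hMl : ∀ (i : Fin (r * (D - 1))) (c : Fin N),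
      M i (τcol (Sum.inl c)) = Ent D (α i.val + c.val / k) (c.val % k + 1) := by
    intro i c
    rw [hM]
    simp only [Matrix.of_apply, hτl c]
    have e1 : (2*k*(c.val/k) + c.val % k)/(D-1) = c.val/k := by
      rw [hk2]; exact dm_div _ (by have := hmlt c; omega)
    have e2 : (2*k*(c.val/k) + c.val % k) % (D-1) = c.val % k := by
      rw [hk2]; exact dm_mod _ (by have := hmlt c; omega)
    rw [e1, e2]
  have hMr : ∀ (i : Fin (r * (D - 1))) (c : Fin N),
      M i (τcol (Sum.inr c)) =
        (-1 : ℚ)^(α i.val + c.val / k) * Ent D (α i.val + c.val / k) (c.val % k + 1) := by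
    intro i c
    rw [hM]
    simp only [Matrix.of_apply, hτr c]
    have e1 : (2*k*(c.val/k) + (2*k - 1 - c.val % k))/(D-1) = c.val/k := by
      rw [hk2]; exact dm_div _ (by have := hmlt c; omega)
    have e2 : (2*k*(c.val/k) + (2*k - 1 - c.val % k)) % (D-1) = 2*k - 1 - c.val % k := by
      rw [hk2]; exact dm_mod _ (by have := hmlt c; omega)
    rw [e1, e2]
    rw [show 2*k - 1 - c.val % k + 1 = D - (c.val % k + 1) by have := hmlt c; omega]
    exact ent_reflect (by omega) (le_trans (hα2' i) (Nat.le_add_right _ _)) (by have := hmlt c; omega)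
  -- parity facts
  have hparL : ∀ a : Fin N, Odd (α a.val) := fun a => hodd a.val a.isLt
  have hparR : ∀ a : Fin N, Even (α (N + a.val)) :=
    fun a => heven _ (Nat.le_add_right _ _) (by have := a.isLt; omega)
  have hε2 : ∀ c : Fin N, ε c * ε c = 1 := by
    intro c; rw [hε]; simp only; split <;> norm_num
  have hpowL : ∀ (a c : Fin N), (-1:ℚ)^(α a.val + c.val/k) = ε c := by
    intro a c; rw [hε]; simp only
    rcases Nat.even_or_odd (c.val/k) with he | ho
    · rw [if_pos he]; exact Odd.neg_one_pow ((hparL a).add_even he)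
    · rw [if_neg (by simpa using Nat.not_even_iff_odd.mpr ho)]
      exact Even.neg_one_pow ((hparL a).add_odd ho)
  have hpowR : ∀ (a c : Fin N), (-1:ℚ)^(α (N + a.val) + c.val/k) = -ε c := by
    intro a c; rw [hε]; simp only
    rcases Nat.even_or_odd (c.val/k) with he | ho
    · rw [if_pos he, neg_neg]; exact Even.neg_one_pow ((hparR a).add he)
    · rw [if_neg (by simpa using Nat.not_even_iff_odd.mpr ho)]
      rw [Odd.neg_one_pow ((hparR a).add_odd ho)]
  -- the key product identity
  have hKey : (M.submatrix τrow τcol) * S =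
      Matrix.fromBlocks ((2:ℚ) • G₁) 0 0 ((2:ℚ) • G₂) := by
    ext x y
    rw [Matrix.mul_apply, Fintype.sum_sum_type]
    cases y with
    | inl c =>
      have h1 : ∀ a : Fin N, S (Sum.inl a) (Sum.inl c) = if a = c then 1 else 0 := by
        intro a; rw [hS]; simp [Matrix.one_apply]
      have h2 : ∀ a : Fin N, S (Sum.inr a) (Sum.inl c) = if a = c then ε a else 0 := by
        intro a; rw [hS]; simp [Matrix.diagonal_apply]
      simp only [Matrix.submatrix_apply, h1, h2, mul_ite, mul_one, mul_zero,
        Finset.sum_ite_eq', Finset.mem_univ, if_true]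
      cases x with
      | inl a =>
        rw [hMl, hMr, hρl a, hpowL a c]
        simp only [Matrix.fromBlocks_apply₁₁, Matrix.smul_apply, smul_eq_mul, hG₁,
          Matrix.of_apply, Nat.zero_add]
        linear_combination (Ent D (α a.val + c.val/k) (c.val % k + 1)) * hε2 c
      | inr a =>
        rw [hMl, hMr, hρr a, hpowR a c]
        simp only [Matrix.fromBlocks_apply₂₁, Matrix.zero_apply]
        linear_combination (-(Ent D (α (N + a.val) + c.val/k) (c.val % k + 1))) * hε2 c
    | inr c =>
      have h1 : ∀ a : Fin N, S (Sum.inl a) (Sum.inr c) = if a = c then 1 else 0 := by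
        intro a; rw [hS]; simp [Matrix.one_apply]
      have h2 : ∀ a : Fin N, S (Sum.inr a) (Sum.inr c) = if a = c then -ε a else 0 := by
        intro a; rw [hS]; simp [Matrix.diagonal_apply]
      simp only [Matrix.submatrix_apply, h1, h2, mul_ite, mul_one, mul_zero,
        Finset.sum_ite_eq', Finset.mem_univ, if_true]
      cases x with
      | inl a =>
        rw [hMl, hMr, hρl a, hpowL a c]
        simp only [Matrix.fromBlocks_apply₁₂, Matrix.zero_apply]
        linear_combination (-(Ent D (α a.val + c.val/k) (c.val % k + 1))) * hε2 c
      | inr a =>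
        rw [hMl, hMr, hρr a, hpowR a c]
        simp only [Matrix.fromBlocks_apply₂₂, Matrix.smul_apply, smul_eq_mul, hG₂,
          Matrix.of_apply]
        linear_combination (Ent D (α (N + a.val) + c.val/k) (c.val % k + 1)) * hε2 c
  -- determinants
  have hprod : (M.submatrix τrow τcol * S).det =
      ((2:ℚ)^N * G₁.det) * ((2:ℚ)^N * G₂.det) := by
    rw [hKey, Matrix.det_fromBlocks_zero₂₁, Matrix.det_smul, Matrix.det_smul, Fintype.card_fin]
  have hpermM : M.submatrix τrow τcol =
      (M.submatrix τrow τrow).submatrix id (τcol.trans τrow.symm) := by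
    ext x y; simp [Matrix.submatrix_apply]
  have hdetsub : (M.submatrix τrow τcol).det =
      ((Equiv.Perm.sign (τcol.trans τrow.symm) : ℤ) : ℚ) * M.det := by
    rw [hpermM, Matrix.det_permute', Matrix.det_submatrix_equiv_self]
  set s : ℚ := ((Equiv.Perm.sign (τcol.trans τrow.symm) : ℤ) : ℚ) with hsdef
  have hs2 : s * s = 1 := by
    rcases Int.units_eq_one_or (Equiv.Perm.sign (τcol.trans τrow.symm)) with h | h <;>
      rw [hsdef, h] <;> norm_num
  have hsne : s ≠ 0 := by
    rcases Int.units_eq_one_or (Equiv.Perm.sign (τcol.trans τrow.symm)) with h | h <;>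
      rw [hsdef, h] <;> norm_num
  have hSne : S.det ≠ 0 := by
    rw [hS, Matrix.det_fromBlocks_one₁₁, Matrix.mul_one, Matrix.diagonal_sub,
      Matrix.det_diagonal]
    apply Finset.prod_ne_zero_iff.mpr
    intro c _
    simp only [hε]
    split <;> norm_num
  have hmul : s * M.det * S.det = ((2:ℚ)^N * G₁.det) * ((2:ℚ)^N * G₂.det) := by
    calc s * M.det * S.det = (M.submatrix τrow τcol).det * S.det := by rw [hdetsub]
      _ = (M.submatrix τrow τcol * S).det := (Matrix.det_mul _ _).symm
      _ = _ := hprod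
  set C : ℚ := s * ((2:ℚ)^N * (2:ℚ)^N) / S.det with hCdef
  have hCne : C ≠ 0 := div_ne_zero (mul_ne_zero hsne (by positivity)) hSne
  have hfact : DeltaTilde r D α = C * DeltaHalf r D α 0 * DeltaHalf r D α N := by
    rw [hDT, hDH1, hDH2, hCdef]
    have hM2 : M.det = s * (s * M.det) := by rw [← mul_assoc, hs2, one_mul]
    rw [hM2]
    field_simp
    linear_combination hmul
  exact ⟨⟨C, hCne, hfact⟩, fun h1 h2 => by
    rw [hfact]; exact mul_ne_zero (mul_ne_zero hCne h1) h2⟩
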